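/- arXiv:0903.1168 — 4 statements merged into one kernel-verified Lean document; each statement's English description precedes it below -/
import Mathlib

section
/- Let A be a unital C*-algebra over ℂ, regarded as a ternary Banach algebra with ternary product [x,y,z] := x · (star y) · z, and let r, s, t be real numbers with r > s > 0 and t > 0. Let h : A → A be a mapping with h((r/s) x) = (r/s) h(x) for all x ∈ A, for which there exists a function φ : A × A × A → [0,∞) satisfying lim_{n→∞} (r/s)^{−n} φ((r/s)^n x, (r/s)^n y, (r/s)^n a) = 0 for all x, y, a ∈ A, and ‖r h((μ s x + μ t y + [a,a,a])/r) − μ s h(x) − μ t h(y) − [h(a), h(a), h(a)]‖ ≤ φ(x,y,a) for all μ ∈ ℂ and all x, y, a ∈ A. Then h is a ternary Jordan homomorphism; in particular h is additive, h(μ x) = μ h(x) for all μ ∈ ℂ and x ∈ A, and h([a,a,a]) = [h(a), h(a), h(a)] for all a ∈ A. -/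
open Filter Topology

/-- Superstability of ternary Jordan homomorphisms on a C*-algebra with
ternary product `[x,y,z] = x * star y * z`. -/
theorem stmt_2 {A : Type*} [NormedRing A] [StarRing A] [CStarRing A]
    [CompleteSpace A] [NormedAlgebra ℂ A] [StarModule ℂ A]
    (r s t : ℝ) (hrs : r > s) (hs : s > 0) (ht : t > 0)
    (h : A → A)
    (hhom : ∀ x : A, h (((r / s : ℝ) : ℂ) • x) = ((r / s : ℝ) : ℂ) • h x)
    (φ : A → A → A → ℝ) (hφ0 : ∀ x y a, 0 ≤ φ x y a)
    (hlim : ∀ x y a : A, Tendsto (fun n : ℕ =>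
      ((r / s) ^ n)⁻¹ * φ ((((r / s) ^ n : ℝ) : ℂ) • x) ((((r / s) ^ n : ℝ) : ℂ) • y)
        ((((r / s) ^ n : ℝ) : ℂ) • a)) atTop (𝓝 0))
    (hineq : ∀ (μ : ℂ) (x y a : A),
      ‖(r : ℂ) • h ((r : ℂ)⁻¹ • (μ • (s : ℂ) • x + μ • (t : ℂ) • y + a * star a * a))
          - μ • (s : ℂ) • h x - μ • (t : ℂ) • h y - h a * star (h a) * h a‖
        ≤ φ x y a) :
    (∀ x y, h (x + y) = h x + h y) ∧
    (∀ (μ : ℂ) (x : A), h (μ • x) = μ • h x) ∧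
    (∀ a : A, h (a * star a * a) = h a * star (h a) * h a) := by
  have hr : (0:ℝ) < r := hs.trans hrs
  have hr0 : (r : ℂ) ≠ 0 := by exact_mod_cast hr.ne'
  have hs0 : (s : ℂ) ≠ 0 := by exact_mod_cast hs.ne'
  have ht0 : (t : ℂ) ≠ 0 := by exact_mod_cast ht.ne'
  set k : ℝ := r / s with hkdef
  have hk1 : (1:ℝ) < k := (one_lt_div hs).2 hrs
  have hk0 : (0:ℝ) < k := lt_trans one_pos hk1
  -- iterated scaling
  have hpow : ∀ (n : ℕ) (z : A), h (((k ^ n : ℝ) : ℂ) • z) = ((k ^ n : ℝ) : ℂ) • h z := by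
    intro n
    induction n with
    | zero => intro z; norm_num
    | succ n ih =>
      intro z
      have e1 : ((k ^ (n+1) : ℝ) : ℂ) • z = ((k : ℝ) : ℂ) • (((k ^ n : ℝ) : ℂ) • z) := by
        rw [smul_smul]; congr 1; push_cast; ring
      rw [e1, hhom, ih, smul_smul]
      congr 1; push_cast; ring
  have h0 : h 0 = 0 := by
    have h1 := hhom 0
    rw [smul_zero] at h1
    have h2 : (((k:ℝ):ℂ) - 1) • h 0 = 0 := by
      rw [sub_smul, one_smul, ← h1, sub_self]
    rcases smul_eq_zero.1 h2 with hc | hv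
    · exfalso
      have : (k:ℝ) = 1 := by exact_mod_cast sub_eq_zero.1 hc
      linarith
    · exact hv
  -- an element whose norm is dominated by the vanishing sequence is zero
  have keyzero : ∀ (E : A) (x y a : A),
      (∀ n : ℕ, ‖E‖ ≤ (k ^ n)⁻¹ *
        φ (((k^n:ℝ):ℂ) • x) (((k^n:ℝ):ℂ) • y) (((k^n:ℝ):ℂ) • a)) → E = 0 := by
    intro E x y a hb
    have hE : ‖E‖ ≤ 0 := ge_of_tendsto (hlim x y a) (Eventually.of_forall hb)
    exact norm_le_zero_iff.1 hE
  -- exact Jensen identity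
  have master : ∀ (μ : ℂ) (x y : A),
      (r:ℂ) • h ((r:ℂ)⁻¹ • (μ • (s:ℂ) • x + μ • (t:ℂ) • y))
        = μ • (s:ℂ) • h x + μ • (t:ℂ) • h y := by
    intro μ x y
    have hE0 : (r:ℂ) • h ((r:ℂ)⁻¹ • (μ • (s:ℂ) • x + μ • (t:ℂ) • y))
        - (μ • (s:ℂ) • h x + μ • (t:ℂ) • h y) = 0 := by
      apply keyzero _ x y 0
      intro n
      have hi := hineq μ (((k^n:ℝ):ℂ) • x) (((k^n:ℝ):ℂ) • y) 0
      have e1 : (r:ℂ)⁻¹ • (μ • (s:ℂ) • (((k^n:ℝ):ℂ) • x) + μ • (t:ℂ) • (((k^n:ℝ):ℂ) • y)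
          + (0:A) * star (0:A) * (0:A))
          = ((k^n:ℝ):ℂ) • ((r:ℂ)⁻¹ • (μ • (s:ℂ) • x + μ • (t:ℂ) • y)) := by
        rw [mul_zero]
        module
      rw [e1, hpow, hpow, hpow, h0] at hi
      have e2 : (r:ℂ) • (((k^n:ℝ):ℂ) • h ((r:ℂ)⁻¹ • (μ • (s:ℂ) • x + μ • (t:ℂ) • y)))
          - μ • (s:ℂ) • (((k^n:ℝ):ℂ) • h x) - μ • (t:ℂ) • (((k^n:ℝ):ℂ) • h y)
          - (0:A) * star (0:A) * (0:A)
          = ((k^n:ℝ):ℂ) • ((r:ℂ) • h ((r:ℂ)⁻¹ • (μ • (s:ℂ) • x + μ • (t:ℂ) • y))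
              - (μ • (s:ℂ) • h x + μ • (t:ℂ) • h y)) := by
        rw [mul_zero]
        module
      rw [e2] at hi
      rw [norm_smul] at hi
      rw [Complex.norm_real, Real.norm_eq_abs, abs_of_pos (pow_pos hk0 n)] at hi
      rw [le_inv_mul_iff₀ (pow_pos hk0 n)]
      simpa using hi
    exact sub_eq_zero.1 hE0
  -- homogeneity
  have hom : ∀ (μ : ℂ) (x : A), h (μ • x) = μ • h x := by
    intro μ x
    have hm := master (μ * (r:ℂ) / (s:ℂ)) x 0
    have e : (r:ℂ)⁻¹ • ((μ * (r:ℂ) / (s:ℂ)) • (s:ℂ) • x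
        + (μ * (r:ℂ) / (s:ℂ)) • (t:ℂ) • (0:A)) = μ • x := by
      match_scalars
      field_simp
    rw [e, h0, smul_zero, smul_zero, add_zero] at hm
    apply smul_right_injective A hr0
    show (r:ℂ) • h (μ • x) = (r:ℂ) • (μ • h x)
    rw [hm]
    match_scalars
    field_simp
  -- additivity
  have add : ∀ x y : A, h (x + y) = h x + h y := by
    intro x y
    have hm := master 1 (((r:ℂ)/(s:ℂ)) • x) (((r:ℂ)/(t:ℂ)) • y)
    have e : (r:ℂ)⁻¹ • ((1:ℂ) • (s:ℂ) • (((r:ℂ)/(s:ℂ)) • x)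
        + (1:ℂ) • (t:ℂ) • (((r:ℂ)/(t:ℂ)) • y)) = x + y := by
      match_scalars <;> field_simp
    rw [e, hom, hom] at hm
    apply smul_right_injective A hr0
    show (r:ℂ) • h (x + y) = (r:ℂ) • (h x + h y)
    rw [hm]
    match_scalars <;> (field_simp; try ring)
  -- ternary property
  have ternary : ∀ a : A, h (a * star a * a) = h a * star (h a) * h a := by
    intro a
    have hE0 : h (a * star a * a) - h a * star (h a) * h a = 0 := by
      apply keyzero _ 0 0 a
      intro n
      have hi := hineq 0 0 0 (((k^n:ℝ):ℂ) • a)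
      have hstar : star (((k^n:ℝ):ℂ) • a) = ((k^n:ℝ):ℂ) • star a := by
        rw [star_smul]
        congr 1
        simp [Complex.conj_ofReal]
      have e1 : (0:ℂ) • (s:ℂ) • (0:A) + (0:ℂ) • (t:ℂ) • (0:A)
          + (((k^n:ℝ):ℂ) • a) * star (((k^n:ℝ):ℂ) • a) * (((k^n:ℝ):ℂ) • a)
          = (((k^n:ℝ):ℂ) * ((k^n:ℝ):ℂ) * ((k^n:ℝ):ℂ)) • (a * star a * a) := by
        rw [hstar, zero_smul, zero_smul, zero_add, zero_add,
          smul_mul_smul_comm, smul_mul_smul_comm]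
      have hstar2 : star (h (((k^n:ℝ):ℂ) • a)) = ((k^n:ℝ):ℂ) • star (h a) := by
        rw [hom, star_smul]
        congr 1
        simp [Complex.conj_ofReal]
      rw [e1, hstar2, hom, hom, hom] at hi
      have e2 : (r:ℂ) • (r:ℂ)⁻¹ •
            ((((k^n:ℝ):ℂ) * ((k^n:ℝ):ℂ) * ((k^n:ℝ):ℂ)) • h (a * star a * a))
          - (0:ℂ) • (s:ℂ) • h (0:A) - (0:ℂ) • (t:ℂ) • h (0:A)
          - (((k^n:ℝ):ℂ) • h a) * (((k^n:ℝ):ℂ) • star (h a)) * (((k^n:ℝ):ℂ) • h a)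
          = (((k^n:ℝ):ℂ) * ((k^n:ℝ):ℂ) * ((k^n:ℝ):ℂ)) •
              (h (a * star a * a) - h a * star (h a) * h a) := by
        rw [smul_smul, smul_smul, mul_inv_cancel₀ hr0, one_mul, zero_smul, zero_smul,
          sub_zero, sub_zero, smul_mul_smul_comm, smul_mul_smul_comm, smul_sub]
      rw [e2] at hi
      rw [norm_smul] at hi
      have hnorm : ‖((k^n:ℝ):ℂ) * ((k^n:ℝ):ℂ) * ((k^n:ℝ):ℂ)‖ = k^n * k^n * k^n := by
        rw [norm_mul, norm_mul, Complex.norm_real, Real.norm_eq_abs,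
          abs_of_pos (pow_pos hk0 n)]
      rw [hnorm] at hi
      have hkn : (0:ℝ) < k^n := pow_pos hk0 n
      have h3 : k^n * k^n * k^n * ‖h (a * star a * a) - h a * star (h a) * h a‖
          ≤ φ (((k^n:ℝ):ℂ) • 0) (((k^n:ℝ):ℂ) • 0) (((k^n:ℝ):ℂ) • a) := by
        simpa using hi
      have h4 : k^n * ‖h (a * star a * a) - h a * star (h a) * h a‖
          ≤ k^n * k^n * k^n * ‖h (a * star a * a) - h a * star (h a) * h a‖ := by
        apply mul_le_mul_of_nonneg_right _ (norm_nonneg _)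
        nlinarith [one_le_pow₀ hk1.le (n := n), pow_pos hk0 n]
      have hφn := hφ0 ((((k^n:ℝ)):ℂ) • (0:A)) ((((k^n:ℝ)):ℂ) • (0:A)) ((((k^n:ℝ)):ℂ) • a)
      calc ‖h (a * star a * a) - h a * star (h a) * h a‖
          = (k^n)⁻¹ * (k^n * ‖h (a * star a * a) - h a * star (h a) * h a‖) := by
            field_simp
        _ ≤ (k^n)⁻¹ * φ (((k^n:ℝ):ℂ) • 0) (((k^n:ℝ):ℂ) • 0) (((k^n:ℝ):ℂ) • a) := by
            apply mul_le_mul_of_nonneg_left _ (by positivity)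
            linarith
    exact sub_eq_zero.1 hE0
  exact ⟨add, hom, ternary⟩
end

section
/- Let A be a unital C*-algebra over ℂ, regarded as a ternary Banach algebra with ternary product [x,y,z] := x · (star y) · z, and let r, s, t be real numbers with r > s > 0 and t > 0. Let h : A → A be a mapping with h((r/s) x) = (r/s) h(x) for all x ∈ A, for which there exists a function φ : A × A × A → [0,∞) satisfying lim_{n→∞} (r/s)^{−n} φ((r/s)^n x, (r/s)^n y, (r/s)^n a) = 0 for all x, y, a ∈ A, and ‖r h((μ s x + μ t y + [a,a,a])/r) − μ s h(x) − μ t h(y) − [h(a), a, a] − [a, h(a), a] − [a, a, h(a)]‖ ≤ φ(x,y,a) for all μ ∈ ℂ and all x, y, a ∈ A. Then h is a ternary Jordan derivation; in particular h is additive, h(μ x) = μ h(x) for all μ ∈ ℂ and x ∈ A, and h([a,a,a]) = [h(a), a, a] + [a, h(a), a] + [a, a, h(a)] for all a ∈ A. -/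
open Filter Topology

/-- Superstability of ternary Jordan derivations on a C*-algebra with
ternary product `[x,y,z] = x * star y * z`. -/
theorem stmt_7 {A : Type*} [NormedRing A] [StarRing A] [CStarRing A]
    [CompleteSpace A] [NormedAlgebra ℂ A] [StarModule ℂ A]
    (r s t : ℝ) (hrs : r > s) (hs : s > 0) (ht : t > 0)
    (h : A → A)
    (hhom : ∀ x : A, h (((r / s : ℝ) : ℂ) • x) = ((r / s : ℝ) : ℂ) • h x)
    (φ : A → A → A → ℝ) (hφ0 : ∀ x y a, 0 ≤ φ x y a)
    (hlim : ∀ x y a : A, Tendsto (fun n : ℕ =>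
      ((r / s) ^ n)⁻¹ * φ ((((r / s) ^ n : ℝ) : ℂ) • x) ((((r / s) ^ n : ℝ) : ℂ) • y)
        ((((r / s) ^ n : ℝ) : ℂ) • a)) atTop (𝓝 0))
    (hineq : ∀ (μ : ℂ) (x y a : A),
      ‖(r : ℂ) • h ((r : ℂ)⁻¹ • (μ • (s : ℂ) • x + μ • (t : ℂ) • y + a * star a * a))
          - μ • (s : ℂ) • h x - μ • (t : ℂ) • h y
          - h a * star a * a - a * star (h a) * a - a * star a * h a‖
        ≤ φ x y a) :
    (∀ x y, h (x + y) = h x + h y) ∧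
    (∀ (μ : ℂ) (x : A), h (μ • x) = μ • h x) ∧
    (∀ a : A, h (a * star a * a) =
      h a * star a * a + a * star (h a) * a + a * star a * h a) := by
  have hr : (0:ℝ) < r := lt_trans hs hrs
  have hrC : (r:ℂ) ≠ 0 := by exact_mod_cast hr.ne'
  have hsC : (s:ℂ) ≠ 0 := by exact_mod_cast hs.ne'
  have htC : (t:ℂ) ≠ 0 := by exact_mod_cast ht.ne'
  set q : ℝ := r / s with hqdef
  have hq1 : 1 < q := (one_lt_div hs).2 hrs
  have hq0 : 0 < q := lt_trans one_pos hq1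
  have hqn0 : ∀ n : ℕ, 0 < q ^ n := fun n => pow_pos hq0 n
  have hqn1 : ∀ n : ℕ, 1 ≤ q ^ n := fun n => one_le_pow₀ hq1.le
  -- iterated homogeneity
  have hpow : ∀ (n : ℕ) (x : A), h (((q ^ n : ℝ) : ℂ) • x) = ((q ^ n : ℝ) : ℂ) • h x := by
    intro n
    induction n with
    | zero => intro x; simp
    | succ n ih =>
      intro x
      have e : ((q ^ (n+1) : ℝ) : ℂ) • x = ((q : ℝ) : ℂ) • (((q ^ n : ℝ) : ℂ) • x) := by
        rw [smul_smul]; push_cast; ring_nf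
      rw [e, hhom, ih, smul_smul]
      congr 1
      push_cast; ring
  -- Step A: exact generalized Jensen equation
  have stepA : ∀ (μ : ℂ) (x y : A),
      (r:ℂ) • h ((r:ℂ)⁻¹ • (μ • (s:ℂ) • x + μ • (t:ℂ) • y))
        = μ • (s:ℂ) • h x + μ • (t:ℂ) • h y := by
    intro μ x y
    set E : A := (r:ℂ) • h ((r:ℂ)⁻¹ • (μ • (s:ℂ) • x + μ • (t:ℂ) • y))
        - μ • (s:ℂ) • h x - μ • (t:ℂ) • h y with hE
    have key : ∀ n : ℕ, ‖E‖ ≤ (q ^ n)⁻¹ * φ (((q^n : ℝ):ℂ) • x) (((q^n : ℝ):ℂ) • y) 0 := by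
      intro n
      have h1 := hineq μ (((q^n : ℝ):ℂ) • x) (((q^n : ℝ):ℂ) • y) 0
      simp only [star_zero, mul_zero, zero_mul, add_zero, sub_zero] at h1
      have harg : (r:ℂ)⁻¹ • (μ • (s:ℂ) • (((q^n : ℝ):ℂ) • x) + μ • (t:ℂ) • (((q^n : ℝ):ℂ) • y))
          = ((q^n : ℝ):ℂ) • ((r:ℂ)⁻¹ • (μ • (s:ℂ) • x + μ • (t:ℂ) • y)) := by
        module
      rw [harg, hpow] at h1
      have hnorm : (r:ℂ) • ((q^n : ℝ):ℂ) • h ((r:ℂ)⁻¹ • (μ • (s:ℂ) • x + μ • (t:ℂ) • y))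
          - μ • (s:ℂ) • (((q^n : ℝ):ℂ) • h x) - μ • (t:ℂ) • (((q^n : ℝ):ℂ) • h y)
          = ((q^n : ℝ):ℂ) • E := by
        rw [hE]; module
      rw [hpow, hpow, hnorm] at h1
      rw [norm_smul] at h1
      have : ‖((q^n : ℝ):ℂ)‖ = q ^ n := by
        rw [Complex.norm_real, Real.norm_eq_abs, abs_of_pos (hqn0 n)]
      rw [this] at h1
      rw [← le_div_iff₀' (hqn0 n)] at h1
      calc ‖E‖ ≤ φ (((q^n : ℝ):ℂ) • x) (((q^n : ℝ):ℂ) • y) 0 / q ^ n := h1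
        _ = (q ^ n)⁻¹ * φ (((q^n : ℝ):ℂ) • x) (((q^n : ℝ):ℂ) • y) 0 := by
            rw [div_eq_inv_mul]
    have hl := hlim x y 0
    simp only [smul_zero] at hl
    have hE0 : ‖E‖ ≤ 0 := ge_of_tendsto hl (Eventually.of_forall key)
    have : E = 0 := norm_le_zero_iff.mp hE0
    rw [hE, sub_sub, sub_eq_zero] at this
    exact this
  -- h 0 = 0
  have h0 : h 0 = 0 := by
    have := stepA 0 0 0
    simp only [zero_smul, smul_zero, add_zero, smul_eq_zero] at this
    rcases this with h' | h'
    · exact absurd h' hrC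
    · simpa using h'
  -- full complex homogeneity
  have homC : ∀ (c : ℂ) (x : A), h (c • x) = c • h x := by
    intro c x
    have e1 : (r:ℂ)⁻¹ • ((c * (r:ℂ) / (t:ℂ)) • (s:ℂ) • (0:A)
        + (c * (r:ℂ) / (t:ℂ)) • (t:ℂ) • x) = c • x := by
      match_scalars
      field_simp
    have h1 := stepA (c * (r:ℂ) / (t:ℂ)) 0 x
    rw [e1, h0] at h1
    have h2 : (r:ℂ) • h (c • x) = (r:ℂ) • (c • h x) := by
      rw [h1]
      match_scalars
      field_simp
    calc h (c • x) = (r:ℂ)⁻¹ • ((r:ℂ) • h (c • x)) := (inv_smul_smul₀ hrC _).symm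
      _ = (r:ℂ)⁻¹ • ((r:ℂ) • (c • h x)) := by rw [h2]
      _ = c • h x := inv_smul_smul₀ hrC _
  -- additivity
  have addv : ∀ u v : A, h (u + v) = h u + h v := by
    intro u v
    have h1 := stepA 1 (((r:ℂ)/(s:ℂ)) • u) (((r:ℂ)/(t:ℂ)) • v)
    rw [homC ((r:ℂ)/(s:ℂ)) u, homC ((r:ℂ)/(t:ℂ)) v] at h1
    have e1 : (r:ℂ)⁻¹ • ((1:ℂ) • (s:ℂ) • (((r:ℂ)/(s:ℂ)) • u)
        + (1:ℂ) • (t:ℂ) • (((r:ℂ)/(t:ℂ)) • v)) = u + v := by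
      match_scalars <;> field_simp
    rw [e1] at h1
    have h2 : (r:ℂ) • h (u + v) = (r:ℂ) • (h u + h v) := by
      rw [h1]
      match_scalars <;> field_simp
    calc h (u + v) = (r:ℂ)⁻¹ • ((r:ℂ) • h (u + v)) := (inv_smul_smul₀ hrC _).symm
      _ = (r:ℂ)⁻¹ • ((r:ℂ) • (h u + h v)) := by rw [h2]
      _ = h u + h v := inv_smul_smul₀ hrC _
  refine ⟨addv, homC, ?_⟩
  -- ternary Jordan derivation property
  intro a
  set E : A := h (a * star a * a)
      - (h a * star a * a + a * star (h a) * a + a * star a * h a) with hE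
  have key : ∀ n : ℕ, ‖E‖ ≤ (q ^ n)⁻¹ * φ 0 0 (((q^n : ℝ):ℂ) • a) := by
    intro n
    have h1 := hineq 0 0 0 (((q^n : ℝ):ℂ) • a)
    set b : A := ((q^n : ℝ):ℂ) • a with hb
    have cube : ∀ x y z : A, (((q^n : ℝ):ℂ) • x) * (((q^n : ℝ):ℂ) • y) * (((q^n : ℝ):ℂ) • z)
        = (((q^n : ℝ):ℂ))^3 • (x * y * z) := by
      intro x y z
      simp only [smul_mul_assoc, mul_smul_comm, smul_smul]
      congr 1
      ring
    have hsm : ∀ z : A, star (((q^n : ℝ):ℂ) • z) = ((q^n : ℝ):ℂ) • star z := by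
      intro z
      rw [star_smul, Complex.star_def, Complex.conj_ofReal]
    have hbstar : star b = ((q^n : ℝ):ℂ) • star a := hsm a
    have hhb : h b = ((q^n : ℝ):ℂ) • h a := hpow n a
    have hcube : b * star b * b = (((q^n : ℝ):ℂ))^3 • (a * star a * a) := by
      rw [hb, hbstar]; exact cube _ _ _
    have hD1 : h b * star b * b = (((q^n : ℝ):ℂ))^3 • (h a * star a * a) := by
      rw [hhb, hbstar, hb]; exact cube _ _ _
    have hD2 : b * star (h b) * b = (((q^n : ℝ):ℂ))^3 • (a * star (h a) * a) := by
      rw [hhb, hsm (h a), hb]; exact cube _ _ _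
    have hD3 : b * star b * h b = (((q^n : ℝ):ℂ))^3 • (a * star a * h a) := by
      rw [hhb, hbstar, hb]; exact cube _ _ _
    have harg : (r:ℂ)⁻¹ • ((0:ℂ) • (s:ℂ) • (0:A) + (0:ℂ) • (t:ℂ) • (0:A) + b * star b * b)
        = ((r:ℂ)⁻¹ * (((q^n : ℝ):ℂ))^3) • (a * star a * a) := by
      rw [hcube]; module
    rw [harg] at h1
    rw [homC, smul_smul] at h1
    have hc : (r:ℂ) * ((r:ℂ)⁻¹ * (((q^n : ℝ):ℂ))^3) = (((q^n : ℝ):ℂ))^3 := by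
      field_simp
    rw [hc] at h1
    rw [hD1, hD2, hD3] at h1
    have hnorm : (((q^n : ℝ):ℂ))^3 • h (a * star a * a)
        - (0:ℂ) • (s:ℂ) • h (0:A) - (0:ℂ) • (t:ℂ) • h (0:A)
        - (((q^n : ℝ):ℂ))^3 • (h a * star a * a)
        - (((q^n : ℝ):ℂ))^3 • (a * star (h a) * a)
        - (((q^n : ℝ):ℂ))^3 • (a * star a * h a)
        = (((q^n : ℝ):ℂ))^3 • E := by
      rw [hE]; module
    rw [hnorm, norm_smul] at h1
    have hnq : ‖(((q^n : ℝ):ℂ))^3‖ = (q^n)^3 := by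
      rw [norm_pow, Complex.norm_real, Real.norm_eq_abs, abs_of_pos (hqn0 n)]
    rw [hnq] at h1
    have h2 : ‖E‖ ≤ ((q^n)^3)⁻¹ * φ 0 0 b := by
      rw [← le_div_iff₀' (pow_pos (hqn0 n) 3)] at h1
      rw [div_eq_inv_mul] at h1
      exact h1
    calc ‖E‖ ≤ ((q^n)^3)⁻¹ * φ 0 0 b := h2
      _ ≤ (q ^ n)⁻¹ * φ 0 0 b := by
          apply mul_le_mul_of_nonneg_right _ (hφ0 0 0 b)
          apply inv_anti₀ (hqn0 n)
          calc q ^ n = (q ^ n) * 1 * 1 := by ring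
            _ ≤ (q ^ n) * (q ^ n) * (q ^ n) := by
                apply mul_le_mul (mul_le_mul le_rfl (hqn1 n) one_pos.le (hqn0 n).le)
                  (hqn1 n) one_pos.le (by positivity)
            _ = (q ^ n)^3 := by ring
  have hl := hlim 0 0 a
  simp only [smul_zero] at hl
  have hE0 : ‖E‖ ≤ 0 := ge_of_tendsto hl (Eventually.of_forall key)
  have hEz : E = 0 := norm_le_zero_iff.mp hE0
  rw [hE, sub_eq_zero] at hEz
  exact hEz
end

section
/- Let A be a unital C*-algebra over ℂ, regarded as a ternary Banach algebra with ternary product [x,y,z] := x · (star y) · z, and let r, s, t be real numbers with r > s > 0 and t > 0. Suppose A is linearly spanned by a set S ⊆ A, and let f : A → A be a mapping with f(0) = 0 such that for all sufficiently large positive integers n, f((r/s)^{2n} [s₁, s₂, a]) = [f((r/s)^n s₁), (r/s)^n s₂, a] + [(r/s)^n s₁, f((r/s)^n s₂), a] + [(r/s)^n s₁, (r/s)^n s₂, f(a)] for all s₁, s₂ ∈ S and a ∈ A. Suppose further there exists φ : A × A × A → [0,∞) with φ̃(x,y,a) := (1/r) ∑_{j=0}^∞ (r/s)^{−j} φ((r/s)^j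 x, (r/s)^j y, (r/s)^j a) < ∞ for all x, y, a ∈ A, such that ‖r f((μ s x + μ t y + [a,a,a])/r) − μ s f(x) − μ t f(y) − [f(a), a, a] − [a, f(a), a] − [a, a, f(a)]‖ ≤ φ(x,y,a) for all μ ∈ 𝕋¹ = {z ∈ ℂ : |z| = 1} and all x, y, a ∈ A. Then there exists a unique ternary Jordan derivation h : A → A such that ‖f(x) − h(x)‖ ≤ φ̃(x,x,0) for all x ∈ A. -/
section Aux

/-- additive + `𝕋`-homogeneous implies `ℂ`-linear -/
lemma aux_clinear {A : Type*} [AddCommGroup A] [Module ℂ A] (f : A → A)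
    (hadd : ∀ u v, f (u + v) = f u + f v)
    (hT : ∀ μ : ℂ, ‖μ‖ = 1 → ∀ x, f (μ • x) = μ • f x) :
    ∀ (c : ℂ) (x : A), f (c • x) = c • f x := by
  have hf0 : f 0 = 0 := by
    have := hadd 0 0
    simpa using this
  have htwo : ∀ z : A, f ((2 : ℂ) • z) = (2 : ℂ) • f z := by
    intro z
    rw [two_smul, two_smul, hadd]
  have hnat : ∀ (n : ℕ) (x : A), f ((n : ℂ) • x) = (n : ℂ) • f x := by
    intro n
    induction n with
    | zero => intro x; simpa using hf0
    | succ k ih =>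
      intro x
      have : ((k : ℂ) + 1) • x = (k : ℂ) • x + x := by
        rw [add_smul, one_smul]
      push_cast
      rw [this, hadd, ih, add_smul, one_smul]
  have hreal1 : ∀ c : ℝ, |c| ≤ 1 → ∀ x, f ((c : ℂ) • x) = (c : ℂ) • f x := by
    intro c hc x
    have hc2 : c ^ 2 ≤ 1 := by
      nlinarith [abs_nonneg c, le_abs_self c, neg_abs_le c]
    set μ : ℂ := Complex.ofReal c + Complex.ofReal (Real.sqrt (1 - c ^ 2)) * Complex.I with hμ
    have hsq : Real.sqrt (1 - c ^ 2) ^ 2 = 1 - c ^ 2 := Real.sq_sqrt (by linarith)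
    have hμnorm : ‖μ‖ = 1 := by
      have h1 : Complex.normSq μ = 1 := by
        simp only [hμ, Complex.normSq_apply, Complex.add_re, Complex.ofReal_re,
          Complex.mul_re, Complex.I_re, Complex.I_im, Complex.ofReal_im, Complex.add_im,
          Complex.mul_im]
        ring_nf
        nlinarith [hsq]
      have h2 : ‖μ‖ = 1 := by
        rw [Complex.norm_def, h1, Real.sqrt_one]
      simpa using h2
    have hμconj : ‖(starRingEnd ℂ) μ‖ = 1 := by
      rwa [RCLike.norm_conj]
    have hre : μ.re = c := by simp [hμ]
    have hsum : μ + (starRingEnd ℂ) μ = ((2 * c : ℝ) : ℂ) := by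
      rw [Complex.add_conj, hre]
    have e1 : f (((2 * c : ℝ) : ℂ) • x) = ((2 * c : ℝ) : ℂ) • f x := by
      rw [← hsum, add_smul, hadd, hT μ hμnorm, hT _ hμconj, ← add_smul]
    have e2 : ((2 * c : ℝ) : ℂ) • x = (2 : ℂ) • ((c : ℂ) • x) := by
      rw [smul_smul]
      congr 1
      push_cast
      ring
    have e3 : ((2 * c : ℝ) : ℂ) • f x = (2 : ℂ) • ((c : ℂ) • f x) := by
      rw [smul_smul]
      congr 1
      push_cast
      ring
    have := e1
    rw [e2, e3, htwo] at this
    exact smul_right_injective A (by norm_num : (2 : ℂ) ≠ 0) this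
  have hreal : ∀ c : ℝ, ∀ x, f ((c : ℂ) • x) = (c : ℂ) • f x := by
    intro c x
    set n : ℕ := ⌊|c|⌋₊ + 1 with hn
    have hn0 : (0 : ℝ) < (n : ℝ) := by positivity
    have hnC : ((n : ℝ) : ℂ) ≠ 0 := by exact_mod_cast ne_of_gt hn0
    have hcn : |c / n| ≤ 1 := by
      rw [abs_div, abs_of_pos hn0, div_le_one hn0]
      calc |c| ≤ ⌊|c|⌋₊ + 1 := (Nat.lt_floor_add_one _).le
      _ = (n : ℝ) := by push_cast [hn]; ring
    have key : (c : ℂ) = (n : ℂ) * ((c / n : ℝ) : ℂ) := by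
      have hcast : ((n : ℝ) : ℂ) = (n : ℂ) := by push_cast; ring
      rw [← hcast, ← Complex.ofReal_mul, Complex.ofReal_inj]
      field_simp
    calc f ((c : ℂ) • x) = f ((n : ℂ) • (((c / n : ℝ) : ℂ) • x)) := by
          rw [smul_smul, ← key]
      _ = (n : ℂ) • f (((c / n : ℝ) : ℂ) • x) := hnat n _
      _ = (n : ℂ) • (((c / n : ℝ) : ℂ) • f x) := by rw [hreal1 _ hcn]
      _ = (c : ℂ) • f x := by rw [smul_smul, ← key]
  intro c x
  rcases eq_or_ne c 0 with hc | hc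
  · simp [hc, hf0]
  · have hnc : ‖c‖ ≠ 0 := norm_ne_zero_iff.2 hc
    have hC : ((‖c‖ : ℝ) : ℂ) ≠ 0 := by exact_mod_cast hnc
    have hu : ‖c / ((‖c‖ : ℝ) : ℂ)‖ = 1 := by
      rw [norm_div, Complex.norm_real, norm_norm]
      exact div_self hnc
    have hcc : ((‖c‖ : ℝ) : ℂ) * (c / ((‖c‖ : ℝ) : ℂ)) = c :=
      mul_div_cancel₀ _ hC
    calc f (c • x) = f (((‖c‖ : ℝ) : ℂ) • ((c / ((‖c‖ : ℝ) : ℂ)) • x)) := by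
          rw [smul_smul, hcc]
      _ = ((‖c‖ : ℝ) : ℂ) • f ((c / ((‖c‖ : ℝ) : ℂ)) • x) := hreal _ _
      _ = ((‖c‖ : ℝ) : ℂ) • ((c / ((‖c‖ : ℝ) : ℂ)) • f x) := by rw [hT _ hu]
      _ = c • f x := by rw [smul_smul, hcc]

end Aux

/-- Stability of ternary Jordan derivations when `A` is linearly spanned by a
set `S` and `f` asymptotically satisfies the derivation identity on spanning
elements. -/
theorem stmt_10 {A : Type*} [NormedRing A] [StarRing A] [CStarRing A]
    [CompleteSpace A] [NormedAlgebra ℂ A] [StarModule ℂ A]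
    (r s t : ℝ) (hrs : r > s) (hs : s > 0) (ht : t > 0)
    (S : Set A) (hspan : Submodule.span ℂ S = ⊤)
    (f : A → A) (hf0 : f 0 = 0)
    (hmul : ∃ N : ℕ, ∀ n : ℕ, n ≥ N → 0 < n → ∀ s₁ ∈ S, ∀ s₂ ∈ S, ∀ a : A,
      f ((((r / s) ^ (2 * n) : ℝ) : ℂ) • (s₁ * star s₂ * a)) =
        f ((((r / s) ^ n : ℝ) : ℂ) • s₁) * star ((((r / s) ^ n : ℝ) : ℂ) • s₂) * a
        + ((((r / s) ^ n : ℝ) : ℂ) • s₁) * star (f ((((r / s) ^ n : ℝ) : ℂ) • s₂)) * a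
        + ((((r / s) ^ n : ℝ) : ℂ) • s₁) * star ((((r / s) ^ n : ℝ) : ℂ) • s₂) * f a)
    (φ : A → A → A → ℝ) (hφ0 : ∀ x y a, 0 ≤ φ x y a)
    (hsum : ∀ x y a : A, Summable (fun j : ℕ =>
      ((r / s) ^ j)⁻¹ * φ ((((r / s) ^ j : ℝ) : ℂ) • x) ((((r / s) ^ j : ℝ) : ℂ) • y)
        ((((r / s) ^ j : ℝ) : ℂ) • a)))
    (hineq : ∀ μ : ℂ, ‖μ‖ = 1 → ∀ x y a : A,
      ‖(r : ℂ) • f ((r : ℂ)⁻¹ • (μ • (s : ℂ) • x + μ • (t : ℂ) • y + a * star a * a))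
          - μ • (s : ℂ) • f x - μ • (t : ℂ) • f y
          - f a * star a * a - a * star (f a) * a - a * star a * f a‖
        ≤ φ x y a) :
    ∃! h : A → A,
      (IsLinearMap ℂ h ∧ ∀ x : A, h (x * star x * x) =
        h x * star x * x + x * star (h x) * x + x * star x * h x) ∧
      ∀ x : A, ‖f x - h x‖ ≤
        (1 / r) * ∑' j : ℕ,
          ((r / s) ^ j)⁻¹ * φ ((((r / s) ^ j : ℝ) : ℂ) • x) ((((r / s) ^ j : ℝ) : ℂ) • x) 0 := by
  obtain ⟨N, hmul⟩ := hmul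
  have hr0 : (0 : ℝ) < r := lt_trans hs hrs
  set q : ℝ := r / s with hqdef
  have hq1 : 1 < q := (one_lt_div hs).2 hrs
  have hq0 : 0 < q := lt_trans one_pos hq1
  set Q : ℂ := ((q : ℝ) : ℂ) with hQdef
  have hQ0 : Q ≠ 0 := by
    simp only [hQdef, ne_eq, Complex.ofReal_eq_zero]
    exact ne_of_gt hq0
  have hQn0 : ∀ n : ℕ, Q ^ n ≠ 0 := fun n => pow_ne_zero n hQ0
  have hQnorm : ∀ n : ℕ, ‖Q ^ n‖ = q ^ n := by
    intro n
    rw [norm_pow, hQdef, Complex.norm_real, Real.norm_of_nonneg hq0.le]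
  simp only [Complex.ofReal_pow, ← hQdef] at hmul hsum ⊢
  -- abbreviation for the scaled sequence
  set F : ℕ → A → A := fun n x => (Q ^ n)⁻¹ • f (Q ^ n • x) with hFdef
  have hsC : (s : ℂ) ≠ 0 := by exact_mod_cast ne_of_gt hs
  have hrC : (r : ℂ) ≠ 0 := by exact_mod_cast ne_of_gt hr0
  have cancel : ∀ (c : ℂ), c ≠ 0 → ∀ u v : A, c • u = c • v → u = v := by
    intro c hc u v hcv
    have := congrArg (fun z => c⁻¹ • z) hcv
    simpa [smul_smul, inv_mul_cancel₀ hc] using this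
  -- the basic one-step estimate
  have hstep : ∀ X : A, ‖(r : ℂ) • f X - (s : ℂ) • f (Q • X)‖ ≤ φ (Q • X) 0 0 := by
    intro X
    have h1 := hineq 1 (by simp) (Q • X) 0 0
    simp only [one_smul, smul_zero, add_zero, mul_zero, zero_mul, star_zero, hf0,
      sub_zero] at h1
    have harg : (r : ℂ)⁻¹ • ((s : ℂ) • (Q • X)) = X := by
      rw [smul_smul, smul_smul]
      have hone : (r : ℂ)⁻¹ * (s : ℂ) * Q = 1 := by
        rw [hQdef, hqdef]
        push_cast
        field_simp
      rw [hone, one_smul]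
    rwa [harg] at h1
  have hstepF : ∀ x : A, ∀ n : ℕ, ‖F n x - F (n + 1) x‖
      ≤ (1 / r) * ((q ^ n)⁻¹ * φ (Q ^ (n + 1) • x) 0 0) := by
    intro x n
    have h1 := hstep (Q ^ n • x)
    have hq' : Q • Q ^ n • x = Q ^ (n + 1) • x := by
      rw [smul_smul, ← pow_succ']
    rw [hq'] at h1
    have heq : F n x - F (n + 1) x
        = ((r : ℂ)⁻¹ * (Q ^ n)⁻¹) • ((r : ℂ) • f (Q ^ n • x) - (s : ℂ) • f (Q ^ (n + 1) • x)) := by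
      simp only [hFdef, smul_sub, smul_smul]
      congr 2
      · field_simp
      · rw [hQdef, hqdef]
        push_cast
        have hs0 : (s : ℂ) ≠ 0 := by exact_mod_cast hs.ne'
        field_simp
        rw [pow_succ]
        field_simp
    have hnormc : ‖(r : ℂ)⁻¹ * (Q ^ n)⁻¹‖ = (1 / r) * (q ^ n)⁻¹ := by
      rw [norm_mul, norm_inv, norm_inv, hQnorm n, Complex.norm_real,
        Real.norm_of_nonneg hr0.le, one_div]
    calc ‖F n x - F (n + 1) x‖
        = ((1 / r) * (q ^ n)⁻¹) * ‖(r : ℂ) • f (Q ^ n • x) - (s : ℂ) • f (Q ^ (n + 1) • x)‖ := by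
          rw [heq, norm_smul, hnormc]
      _ ≤ ((1 / r) * (q ^ n)⁻¹) * φ (Q ^ (n + 1) • x) 0 0 := by
          apply mul_le_mul_of_nonneg_left h1
          positivity
      _ = (1 / r) * ((q ^ n)⁻¹ * φ (Q ^ (n + 1) • x) 0 0) := by ring
  have hsummx : ∀ x : A, Summable (fun n : ℕ => (1 / r) * ((q ^ n)⁻¹ * φ (Q ^ (n + 1) • x) 0 0)) := by
    intro x
    have h1 := hsum (Q • x) 0 0
    simp only [smul_zero] at h1
    have h2 : ∀ j : ℕ, Q ^ j • Q • x = Q ^ (j + 1) • x := by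
      intro j
      rw [smul_smul, ← pow_succ]
    simp only [h2] at h1
    exact h1.mul_left _
  have hcauchy : ∀ x : A, ∃ l : A, Filter.Tendsto (fun n => F n x) Filter.atTop (nhds l) := by
    intro x
    refine cauchySeq_tendsto_of_complete ?_
    exact cauchySeq_of_dist_le_of_summable _
      (fun n => by rw [dist_eq_norm]; exact hstepF x n) (hsummx x)
  choose h hh using hcauchy
  have hFshift : ∀ (x : A) (n : ℕ), F n (Q • x) = Q • F (n + 1) x := by
    intro x n
    simp only [hFdef]
    rw [smul_smul, ← pow_succ, smul_smul]
    congr 1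
    rw [pow_succ]
    field_simp
  have hhQ : ∀ x, h (Q • x) = Q • h x := by
    intro x
    have t1 : Filter.Tendsto (fun n => F n (Q • x)) Filter.atTop (nhds (h (Q • x))) := hh _
    have t2 : Filter.Tendsto (fun n => Q • F (n + 1) x) Filter.atTop (nhds (Q • h x)) :=
      ((hh x).comp (Filter.tendsto_add_atTop_nat 1)).const_smul Q
    refine tendsto_nhds_unique ?_ t2
    exact t1.congr (fun n => hFshift x n)
  have hhQn : ∀ (m : ℕ) (x : A), h (Q ^ m • x) = Q ^ m • h x := by
    intro m
    induction m with
    | zero => intro x; simp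
    | succ k ih =>
      intro x
      have : Q ^ (k + 1) • x = Q ^ k • (Q • x) := by
        rw [smul_smul, ← pow_succ]
      rw [this, ih, hhQ, smul_smul, ← pow_succ]
  -- star commutes with the (real) scalars Q ^ n and their inverses
  have hQstarC : ∀ n : ℕ, star (Q ^ n) = Q ^ n := by
    intro n
    rw [star_pow]
    congr 1
    rw [hQdef]
    exact Complex.conj_ofReal q
  have hQconj : (starRingEnd ℂ) Q = Q := by
    rw [hQdef]
    exact Complex.conj_ofReal q
  have hQstarCi : ∀ n : ℕ, star ((Q ^ n)⁻¹) = (Q ^ n)⁻¹ := by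
    intro n
    rw [star_inv₀, hQstarC]
  have hQstar : ∀ (n : ℕ) (z : A), star (Q ^ n • z) = Q ^ n • star z := by
    intro n z
    rw [star_smul, hQstarC]
  have hQstari : ∀ (n : ℕ) (z : A), star ((Q ^ n)⁻¹ • z) = (Q ^ n)⁻¹ • star z := by
    intro n z
    rw [star_smul, hQstarCi]
  -- limit form of the multiplicative hypothesis
  have hstar1 : ∀ s₁ ∈ S, ∀ s₂ ∈ S, ∀ a : A,
      h (s₁ * star s₂ * a) = h s₁ * star s₂ * a + s₁ * star (h s₂) * a + s₁ * star s₂ * f a := by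
    intro s₁ hs₁ s₂ hs₂ a
    have hev : ∀ n : ℕ, N ≤ n → 1 ≤ n →
        F (2 * n) (s₁ * star s₂ * a)
          = F n s₁ * star s₂ * a + s₁ * star (F n s₂) * a + s₁ * star s₂ * f a := by
      intro n hN hn1
      have hm := hmul n hN (by omega) s₁ hs₁ s₂ hs₂ a
      simp only [hFdef]
      apply cancel (Q ^ (2 * n)) (hQn0 _)
      rw [smul_smul, mul_inv_cancel₀ (hQn0 _), one_smul, hm]
      simp only [star_smul, Complex.star_def, map_inv₀, map_pow, hQconj,
        smul_mul_assoc, mul_smul_comm, smul_add, smul_smul]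
      match_scalars <;> field_simp <;> ring
    have t1 : Filter.Tendsto (fun n => F (2 * n) (s₁ * star s₂ * a)) Filter.atTop
        (nhds (h (s₁ * star s₂ * a))) :=
      (hh _).comp (Filter.tendsto_atTop_mono
        (fun n => Nat.le_mul_of_pos_left n two_pos) Filter.tendsto_id)
    have t2 : Filter.Tendsto
        (fun n => F n s₁ * star s₂ * a + s₁ * star (F n s₂) * a + s₁ * star s₂ * f a)
        Filter.atTop
        (nhds (h s₁ * star s₂ * a + s₁ * star (h s₂) * a + s₁ * star s₂ * f a)) := by
      refine Filter.Tendsto.add (Filter.Tendsto.add ?_ ?_) tendsto_const_nhds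
      · exact (((hh s₁).mul tendsto_const_nhds).mul tendsto_const_nhds)
      · refine Filter.Tendsto.mul (Filter.Tendsto.mul tendsto_const_nhds ?_) tendsto_const_nhds
        exact (continuous_star.tendsto (h s₂)).comp (hh s₂)
    refine tendsto_nhds_unique (t1.congr' ?_) t2
    filter_upwards [Filter.eventually_ge_atTop (max N 1)] with n hn
    exact hev n (le_trans (le_max_left _ _) hn) (le_trans (le_max_right _ _) hn)
  -- second limit: replace f by h in the last slot
  have hstar2 : ∀ s₁ ∈ S, ∀ s₂ ∈ S, ∀ a : A,
      s₁ * star s₂ * f a = s₁ * star s₂ * h a := by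
    intro s₁ hs₁ s₂ hs₂ a
    have key : ∀ m : ℕ, h (s₁ * star s₂ * a)
        = h s₁ * star s₂ * a + s₁ * star (h s₂) * a + s₁ * star s₂ * F m a := by
      intro m
      have h1 := hstar1 s₁ hs₁ s₂ hs₂ (Q ^ m • a)
      simp only [mul_smul_comm, hhQn] at h1
      apply cancel (Q ^ m) (hQn0 m)
      rw [h1]
      simp only [hFdef, smul_add, mul_smul_comm, smul_smul,
        mul_inv_cancel₀ (hQn0 m), one_smul]
    have t4 : Filter.Tendsto
        (fun m => h s₁ * star s₂ * a + s₁ * star (h s₂) * a + s₁ * star s₂ * F m a)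
        Filter.atTop
        (nhds (h s₁ * star s₂ * a + s₁ * star (h s₂) * a + s₁ * star s₂ * h a)) :=
      Filter.Tendsto.add tendsto_const_nhds (tendsto_const_nhds.mul (hh a))
    have e5 : h (s₁ * star s₂ * a)
        = h s₁ * star s₂ * a + s₁ * star (h s₂) * a + s₁ * star s₂ * h a :=
      tendsto_nhds_unique (tendsto_const_nhds.congr key) t4
    have e6 := hstar1 s₁ hs₁ s₂ hs₂ a
    have : h s₁ * star s₂ * a + s₁ * star (h s₂) * a + s₁ * star s₂ * f a
        = h s₁ * star s₂ * a + s₁ * star (h s₂) * a + s₁ * star s₂ * h a := by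
      rw [← e6, ← e5]
    exact add_left_cancel this
  -- rigidity: f = h
  have hfh : ∀ a : A, f a = h a := by
    intro a
    set w : A := f a - h a with hw
    have hw0 : ∀ s₁ ∈ S, ∀ s₂ ∈ S, s₁ * (star s₂ * w) = 0 := by
      intro s₁ hs₁ s₂ hs₂
      have h1 := hstar2 s₁ hs₁ s₂ hs₂ a
      have h2 : s₁ * star s₂ * w = 0 := by
        rw [hw, mul_sub, h1, sub_self]
      rwa [mul_assoc] at h2
    have step1 : ∀ s₂ ∈ S, star s₂ * w = 0 := by
      intro s₂ hs₂
      have hker : Submodule.span ℂ S ≤ LinearMap.ker (LinearMap.mulRight ℂ (star s₂ * w)) := by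
        rw [Submodule.span_le]
        intro x hx
        simpa [LinearMap.mem_ker, mul_assoc] using hw0 x hx s₂ hs₂
      have h1 : (1 : A) ∈ LinearMap.ker (LinearMap.mulRight ℂ (star s₂ * w)) := by
        apply hker
        rw [hspan]
        trivial
      simpa using h1
    have hM : ∀ y : A, star y * w = 0 := by
      intro y
      have hmem : y ∈ Submodule.span ℂ S := by rw [hspan]; trivial
      induction hmem using Submodule.span_induction with
      | mem x hx => exact step1 x hx
      | zero => simp
      | add x z hx hz ihx ihz => rw [star_add, add_mul, ihx, ihz, add_zero]
      | smul c x hx ih => rw [star_smul, smul_mul_assoc, ih, smul_zero]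
    have := hM 1
    rwa [star_one, one_mul, hw, sub_eq_zero] at this
  -- scaling identity for f itself
  have fQm : ∀ (m : ℕ) (x : A), f (Q ^ m • x) = Q ^ m • f x := by
    intro m x
    rw [hfh, hhQn, ← hfh]
  -- terms of the summable series tend to zero
  have htend0 : ∀ x y : A,
      Filter.Tendsto (fun n : ℕ => (q ^ n)⁻¹ * φ (Q ^ n • x) (Q ^ n • y) 0)
        Filter.atTop (nhds 0) := by
    intro x y
    have h1 := (hsum x y 0).tendsto_atTop_zero
    simpa [smul_zero] using h1
  -- the exact generalized Jensen equation
  have hJ : ∀ μ : ℂ, ‖μ‖ = 1 → ∀ x y : A,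
      (r : ℂ) • f ((r : ℂ)⁻¹ • (μ • (s : ℂ) • x + μ • (t : ℂ) • y))
        = μ • (s : ℂ) • f x + μ • (t : ℂ) • f y := by
    intro μ hμ x y
    set D : A := (r : ℂ) • f ((r : ℂ)⁻¹ • (μ • (s : ℂ) • x + μ • (t : ℂ) • y))
      - μ • (s : ℂ) • f x - μ • (t : ℂ) • f y with hD
    have hbound : ∀ n : ℕ, ‖D‖ ≤ (q ^ n)⁻¹ * φ (Q ^ n • x) (Q ^ n • y) 0 := by
      intro n
      have h1 := hineq μ hμ (Q ^ n • x) (Q ^ n • y) 0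
      simp only [mul_zero, zero_mul, star_zero, hf0, smul_zero, add_zero, sub_zero] at h1
      have harg : (r : ℂ)⁻¹ • (μ • (s : ℂ) • Q ^ n • x + μ • (t : ℂ) • Q ^ n • y)
          = Q ^ n • ((r : ℂ)⁻¹ • (μ • (s : ℂ) • x + μ • (t : ℂ) • y)) := by
        module
      rw [harg, fQm, fQm, fQm] at h1
      have hfull : (r : ℂ) • Q ^ n • f ((r : ℂ)⁻¹ • (μ • (s : ℂ) • x + μ • (t : ℂ) • y))
          - μ • (s : ℂ) • Q ^ n • f x - μ • (t : ℂ) • Q ^ n • f y = Q ^ n • D := by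
        rw [hD]
        module
      rw [hfull, norm_smul, hQnorm n] at h1
      calc ‖D‖ = (q ^ n)⁻¹ * (q ^ n * ‖D‖) := by
            field_simp
        _ ≤ (q ^ n)⁻¹ * φ (Q ^ n • x) (Q ^ n • y) 0 := by
            apply mul_le_mul_of_nonneg_left h1
            positivity
    have hD0 : D = 0 := by
      rw [← norm_le_zero_iff]
      exact ge_of_tendsto' (htend0 x y) hbound
    rw [hD, sub_sub, sub_eq_zero] at hD0
    exact hD0
  -- scaling identities
  have hscale_s : ∀ u : A, (s : ℂ) • f (((r : ℂ) / (s : ℂ)) • u) = (r : ℂ) • f u := by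
    intro u
    have h1 := hJ 1 (by simp) (((r : ℂ) / (s : ℂ)) • u) 0
    simp only [smul_zero, add_zero, hf0, one_smul] at h1
    have harg : (r : ℂ)⁻¹ • ((s : ℂ) • ((r : ℂ) / (s : ℂ)) • u) = u := by
      rw [smul_smul, smul_smul]
      rw [show (r : ℂ)⁻¹ * (s : ℂ) * ((r : ℂ) / (s : ℂ)) = 1 by field_simp]
      rw [one_smul]
    rw [harg] at h1
    exact h1.symm
  have htC : (t : ℂ) ≠ 0 := by exact_mod_cast ne_of_gt ht
  have hscale_t : ∀ u : A, (t : ℂ) • f (((r : ℂ) / (t : ℂ)) • u) = (r : ℂ) • f u := by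
    intro u
    have h1 := hJ 1 (by simp) 0 (((r : ℂ) / (t : ℂ)) • u)
    simp only [smul_zero, zero_add, hf0, one_smul] at h1
    have harg : (r : ℂ)⁻¹ • ((t : ℂ) • ((r : ℂ) / (t : ℂ)) • u) = u := by
      rw [smul_smul, smul_smul]
      rw [show (r : ℂ)⁻¹ * (t : ℂ) * ((r : ℂ) / (t : ℂ)) = 1 by field_simp]
      rw [one_smul]
    rw [harg] at h1
    exact h1.symm
  -- additivity
  have hadd : ∀ u v : A, f (u + v) = f u + f v := by
    intro u v
    have h1 := hJ 1 (by simp) (((r : ℂ) / (s : ℂ)) • u) (((r : ℂ) / (t : ℂ)) • v)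
    simp only [one_smul] at h1
    have harg : (r : ℂ)⁻¹ • ((s : ℂ) • ((r : ℂ) / (s : ℂ)) • u
        + (t : ℂ) • ((r : ℂ) / (t : ℂ)) • v) = u + v := by
      rw [smul_add, smul_smul, smul_smul, smul_smul, smul_smul]
      rw [show (r : ℂ)⁻¹ * (s : ℂ) * ((r : ℂ) / (s : ℂ)) = 1 by field_simp]
      rw [show (r : ℂ)⁻¹ * (t : ℂ) * ((r : ℂ) / (t : ℂ)) = 1 by field_simp]
      rw [one_smul, one_smul]
    rw [harg, hscale_s, hscale_t, ← smul_add] at h1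
    exact cancel _ hrC _ _ h1
  -- 𝕋-homogeneity
  have hThom : ∀ μ : ℂ, ‖μ‖ = 1 → ∀ x : A, f (μ • x) = μ • f x := by
    intro μ hμ x
    have h1 := hJ μ hμ x 0
    simp only [smul_zero, add_zero, hf0] at h1
    have h2 := hJ 1 (by simp) (μ • x) 0
    simp only [smul_zero, add_zero, hf0, one_smul] at h2
    have harg : (s : ℂ) • μ • x = μ • (s : ℂ) • x := smul_comm _ _ _
    rw [harg] at h2
    have h3 : (s : ℂ) • f (μ • x) = (s : ℂ) • μ • f x := by
      rw [← h2, h1, smul_comm]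
    exact cancel _ hsC _ _ h3
  -- full ℂ-linearity
  have hlin : ∀ (c : ℂ) (x : A), f (c • x) = c • f x := aux_clinear f hadd hThom
  -- exact Leibniz rule on S × S × A
  have hLb : ∀ s₁ ∈ S, ∀ s₂ ∈ S, ∀ a : A,
      f (s₁ * star s₂ * a) = f s₁ * star s₂ * a + s₁ * star (f s₂) * a + s₁ * star s₂ * f a := by
    intro s₁ hs₁ s₂ hs₂ a
    have hm := hmul (max N 1) (le_max_left _ _) (by omega) s₁ hs₁ s₂ hs₂ a
    set n : ℕ := max N 1 with hn
    rw [hlin, hlin, hlin] at hm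
    simp only [star_smul, Complex.star_def, map_pow, hQconj,
      smul_mul_assoc, mul_smul_comm, smul_smul] at hm
    have h2n : Q ^ n * Q ^ n = Q ^ (2 * n) := by rw [← pow_add, two_mul]
    rw [h2n] at hm
    apply cancel (Q ^ (2 * n)) (hQn0 _)
    rw [hm, smul_add, smul_add]
  -- extend in the first variable over the span
  have hLb2 : ∀ (x : A), ∀ s₂ ∈ S, ∀ a : A,
      f (x * star s₂ * a) = f x * star s₂ * a + x * star (f s₂) * a + x * star s₂ * f a := by
    intro x s₂ hs₂ a
    have hx : x ∈ Submodule.span ℂ S := by rw [hspan]; trivial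
    induction hx using Submodule.span_induction with
    | mem z hz => exact hLb z hz s₂ hs₂ a
    | zero => simp [hf0]
    | add u v hu hv ihu ihv =>
      simp only [add_mul, hadd, ihu, ihv]
      abel
    | smul c u hu ih =>
      simp only [smul_mul_assoc, hlin, ih, smul_add]
  -- extend in the second variable over the span
  have hLb3 : ∀ x y a : A,
      f (x * star y * a) = f x * star y * a + x * star (f y) * a + x * star y * f a := by
    intro x y a
    have hy : y ∈ Submodule.span ℂ S := by rw [hspan]; trivial
    induction hy using Submodule.span_induction with
    | mem z hz => exact hLb2 x z hz a
    | zero => simp [hf0]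
    | add u v hu hv ihu ihv =>
      simp only [star_add, mul_add, add_mul, hadd, ihu, ihv]
      abel
    | smul c u hu ih =>
      simp only [star_smul, hlin, mul_smul_comm, smul_mul_assoc, ih, smul_add]
  -- assemble the existence and uniqueness statement
  refine ⟨f, ⟨⟨⟨hadd, fun c x => hlin c x⟩, fun x => hLb3 x x x⟩, fun x => ?_⟩,
    fun g hg => ?_⟩
  · rw [sub_self, norm_zero]
    have h1 : 0 ≤ ∑' j : ℕ, (q ^ j)⁻¹ * φ (Q ^ j • x) (Q ^ j • x) 0 :=
      tsum_nonneg fun j => mul_nonneg (by positivity) (hφ0 _ _ _)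
    have h2 : (0 : ℝ) ≤ 1 / r := by positivity
    exact mul_nonneg h2 h1
  · obtain ⟨⟨hglin, -⟩, hgbound⟩ := hg
    funext x
    have hgQ : ∀ n : ℕ, g (Q ^ n • x) = Q ^ n • g x := fun n => hglin.map_smul _ _
    set G : ℕ → ℝ := fun k => (q ^ k)⁻¹ * φ (Q ^ k • x) (Q ^ k • x) 0 with hG
    have hbnd : ∀ n : ℕ, ‖f x - g x‖ ≤ (1 / r) * ∑' j : ℕ, G (j + n) := by
      intro n
      have h1 := hgbound (Q ^ n • x)
      have h2 : ∀ j : ℕ, Q ^ j • Q ^ n • x = Q ^ (j + n) • x := by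
        intro j
        rw [smul_smul, ← pow_add]
      simp only [h2] at h1
      have h3 : f (Q ^ n • x) - g (Q ^ n • x) = Q ^ n • (f x - g x) := by
        rw [fQm, hgQ, smul_sub]
      rw [h3, norm_smul, hQnorm] at h1
      calc ‖f x - g x‖ = (q ^ n)⁻¹ * (q ^ n * ‖f x - g x‖) := by
            field_simp
        _ ≤ (q ^ n)⁻¹ * ((1 / r) * ∑' j : ℕ, (q ^ j)⁻¹ *
              φ (Q ^ (j + n) • x) (Q ^ (j + n) • x) 0) := by
            apply mul_le_mul_of_nonneg_left h1
            positivity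
        _ = (1 / r) * ((q ^ n)⁻¹ * ∑' j : ℕ, (q ^ j)⁻¹ *
              φ (Q ^ (j + n) • x) (Q ^ (j + n) • x) 0) := by ring
        _ = (1 / r) * ∑' j : ℕ, G (j + n) := by
            have h4 : ∀ j : ℕ, (q ^ n)⁻¹ * ((q ^ j)⁻¹ *
                φ (Q ^ (j + n) • x) (Q ^ (j + n) • x) 0) = G (j + n) := by
              intro j
              simp only [hG]
              rw [pow_add q j n, mul_inv]
              ring
            congr 1
            rw [← tsum_mul_left]
            exact tsum_congr h4
    have htail : Filter.Tendsto (fun n : ℕ => (1 / r) * ∑' j : ℕ, G (j + n))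
        Filter.atTop (nhds 0) := by
      have := (tendsto_sum_nat_add G).const_mul (1 / r)
      simpa using this
    have hle : ‖f x - g x‖ ≤ 0 := ge_of_tendsto' htail hbnd
    have : f x - g x = 0 := norm_le_zero_iff.1 hle
    rw [sub_eq_zero] at this
    exact this.symm
end

section
/- Let X and Y be complex normed vector spaces and let h : X → Y be an additive mapping such that h(μ x) = μ h(x) for all μ ∈ 𝕋¹ = {z ∈ ℂ : |z| = 1} and all x ∈ X. Then h is ℂ-linear, i.e., h(λ x) = λ h(x) for all λ ∈ ℂ and all x ∈ X. -/
/-- Every complex number of norm at most 2 is a sum of two unit-modulus numbers. -/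
lemma two_unit_decomp (z : ℂ) (hz : ‖z‖ ≤ 2) :
    ∃ μ₁ μ₂ : ℂ, ‖μ₁‖ = 1 ∧ ‖μ₂‖ = 1 ∧ μ₁ + μ₂ = z := by
  by_cases h0 : z = 0
  · exact ⟨1, -1, by simp, by simp, by simp [h0]⟩
  · set t : ℝ := ‖z‖ / 2 with ht
    have hz0 : 0 < ‖z‖ := norm_pos_iff.mpr h0
    have ht0 : 0 < t := by positivity
    have ht1 : t ≤ 1 := by
      rw [ht]; linarith
    set s : ℝ := Real.sqrt (1 - t ^ 2) with hs
    have hs2 : s ^ 2 = 1 - t ^ 2 := Real.sq_sqrt (by nlinarith)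
    have hw : ‖(t : ℂ) + s * Complex.I‖ = 1 := by
      rw [Complex.norm_add_mul_I]
      rw [show t ^ 2 + s ^ 2 = 1 by nlinarith]
      exact Real.sqrt_one
    have hw' : ‖(t : ℂ) - s * Complex.I‖ = 1 := by
      rw [sub_eq_add_neg, ← neg_mul, ← Complex.ofReal_neg,
        Complex.norm_add_mul_I]
      rw [show t ^ 2 + (-s) ^ 2 = 1 by nlinarith]
      exact Real.sqrt_one
    have hu : ‖z / (‖z‖ : ℂ)‖ = 1 := by
      rw [norm_div]
      simp only [Complex.norm_real, Real.norm_of_nonneg (norm_nonneg z)]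
      exact div_self (norm_ne_zero_iff.mpr h0)
    refine ⟨z / ‖z‖ * ((t : ℂ) + s * Complex.I), z / ‖z‖ * ((t : ℂ) - s * Complex.I),
      by rw [norm_mul, hu, hw, one_mul], by rw [norm_mul, hu, hw', one_mul], ?_⟩
    have hzn : (‖z‖ : ℂ) ≠ 0 := by
      exact_mod_cast Complex.ofReal_ne_zero.mpr (norm_ne_zero_iff.mpr h0)
    have habs : ((‖z‖ : ℝ) : ℂ) ≠ 0 := by
      simpa using hzn
    field_simp [ht]
    rw [ht]; push_cast; ring

/-- An additive map between complex normed spaces that is homogeneous with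
respect to all unit-modulus scalars is `ℂ`-linear. -/
theorem stmt_11 {X Y : Type*} [NormedAddCommGroup X] [NormedSpace ℂ X]
    [NormedAddCommGroup Y] [NormedSpace ℂ Y]
    (h : X → Y) (hadd : ∀ x y : X, h (x + y) = h x + h y)
    (hT : ∀ μ : ℂ, ‖μ‖ = 1 → ∀ x : X, h (μ • x) = μ • h x) :
    ∀ (l : ℂ) (x : X), h (l • x) = l • h x := by
  have h0 : h 0 = 0 := by
    have := hadd 0 0
    simpa using this.symm
  have hnat : ∀ n : ℕ, ∀ v : X, h ((n : ℂ) • v) = (n : ℂ) • h v := by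
    intro n
    induction n with
    | zero => intro v; simp [h0]
    | succ k ih =>
      intro v
      have : ((k + 1 : ℕ) : ℂ) • v = (k : ℂ) • v + v := by
        push_cast; rw [add_smul, one_smul]
      rw [this, hadd, ih]
      push_cast
      rw [add_smul, one_smul]
  have hsmall : ∀ l : ℂ, ‖l‖ ≤ 2 → ∀ x : X, h (l • x) = l • h x := by
    intro l hl x
    obtain ⟨μ₁, μ₂, h1, h2, hsum⟩ := two_unit_decomp l hl
    rw [← hsum, add_smul, hadd, hT μ₁ h1, hT μ₂ h2, add_smul]
  intro l x
  set n : ℕ := ⌈‖l‖⌉₊ + 1 with hn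
  have hn0 : (n : ℂ) ≠ 0 := Nat.cast_ne_zero.mpr (by omega)
  have hln : ‖l / n‖ ≤ 2 := by
    rw [norm_div]
    have h1 : ‖l‖ ≤ n := le_trans (Nat.le_ceil _) (by exact_mod_cast Nat.le_succ _)
    have h2 : (1 : ℝ) ≤ ‖(n : ℂ)‖ := by
      rw [show ‖(n : ℂ)‖ = (n : ℝ) by simp]
      exact_mod_cast Nat.one_le_iff_ne_zero.mpr (by omega)
    calc ‖l‖ / ‖(n : ℂ)‖ ≤ ‖(n : ℂ)‖ / ‖(n : ℂ)‖ := by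
          apply div_le_div_of_nonneg_right ?_ (by linarith) |>.trans_eq rfl
          · rw [show ‖(n : ℂ)‖ = (n : ℝ) by simp]; exact h1
      _ ≤ 2 := by
          rw [div_self (by linarith)]; norm_num
  have key : l • x = (n : ℂ) • ((l / n) • x) := by
    rw [smul_smul]
    congr 1
    field_simp
  rw [key, hnat n, hsmall _ hln, smul_smul]
  congr 1
  field_simp
end
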